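/- arXiv:math/0405504 — 3 statements merged into one kernel-verified Lean document; each statement's English description precedes it below -/
import Mathlib

section
/- Let P_{1,n} be the subgroup of B_{1,n} generated by the elements t, t'_1, …, t'_{n-1}, where t'_i := σ_i σ_{i-1} ⋯ σ_1 t σ_1^{-1} ⋯ σ_{i-1}^{-1} σ_i^{-1}, and let B_n be the subgroup of B_{1,n} generated by σ_1, …, σ_{n-1} (isomorphic to the Artin braid group on n strands). Then P_{1,n} is a normal subgroup of B_{1,n}, it is a free group freely generated by t, t'_1, …, t'_{n-1}, and B_{1,n} decomposes as the internal semidirect product B_{1,n} = P_{1,n} ⋊ B_n; in particular every element w of B_{1,n} can be written uniquely as a product w = v·σ with v ∈ P_{1,n} and σ ∈ B_n. -/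
/-!
Knot theory related to generalized and cyclotomic Hecke algebras of type B
(S. Lambropoulou).  The Artin braid group `B_{1,n}` of type `B_n`, presented by
generators `t, σ_1, …, σ_{n-1}` and the relations
`σ_1 t σ_1 t = t σ_1 t σ_1`, `t σ_i = σ_i t` for `i > 1`,
`σ_i σ_j = σ_j σ_i` for `|i-j| > 1`, and
`σ_i σ_{i+1} σ_i = σ_{i+1} σ_i σ_{i+1}`.
-/

namespace KnotTypeB

/-- Generators of the braid group of type `B_n`: `none` is the generator `t`, while
`some i` (for `i : Fin (n-1)`) is the generator `σ_{i+1}`; this gives `σ_1, …, σ_{n-1}`. -/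
abbrev BGen (n : ℕ) := Option (Fin (n - 1))

open FreeGroup in
/-- The defining relators of the Artin braid group of type `B_n`. -/
def bRels (n : ℕ) : Set (FreeGroup (BGen n)) :=
  {r | (∃ i j : Fin (n - 1), (i : ℕ) + 1 = (j : ℕ) ∧
          r = of (some i) * of (some j) * of (some i) *
              (of (some j) * of (some i) * of (some j))⁻¹) ∨
       (∃ i j : Fin (n - 1), (i : ℕ) + 1 < (j : ℕ) ∧
          r = of (some i) * of (some j) * (of (some j) * of (some i))⁻¹) ∨
       (∃ i : Fin (n - 1), (i : ℕ) = 0 ∧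
          r = (of (none : BGen n)) * of (some i) * of (none : BGen n) * of (some i) *
              (of (some i) * of (none : BGen n) * of (some i) * of (none : BGen n))⁻¹) ∨
       (∃ i : Fin (n - 1), 0 < (i : ℕ) ∧
          r = of (none : BGen n) * of (some i) * (of (some i) * of (none : BGen n))⁻¹)}

/-- The Artin braid group `B_{1,n}` of type `B_n`. -/
abbrev B1 (n : ℕ) := PresentedGroup (bRels n)

/-- The generator `σ_i` of `B_{1,n}`, for `1 ≤ i ≤ n-1` (junk value `1` outside
this range). -/
def sigB (n i : ℕ) : B1 n :=
  if h : 1 ≤ i ∧ i ≤ n - 1 then PresentedGroup.of (some ⟨i - 1, by omega⟩) else 1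

/-- The generator `t` of `B_{1,n}`. -/
def tB (n : ℕ) : B1 n := PresentedGroup.of none

/-- The element `t'_i = σ_i σ_{i-1} ⋯ σ_1 t σ_1⁻¹ ⋯ σ_{i-1}⁻¹ σ_i⁻¹` of `B_{1,n}`,
with `t'_0 = t`. -/
def tpB (n : ℕ) : ℕ → B1 n
  | 0 => tB n
  | i + 1 => sigB n (i + 1) * tpB n i * (sigB n (i + 1))⁻¹


/-- The subgroup `P_{1,n}` of `B_{1,n}` generated by `t = t'_0, t'_1, …, t'_{n-1}`. -/
def Pn (n : ℕ) : Subgroup (B1 n) :=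
  Subgroup.closure (Set.range fun i : Fin n => tpB n (i : ℕ))

/-- The subgroup of `B_{1,n}` generated by `σ_1, …, σ_{n-1}` (a copy of the Artin braid
group `B_n` on `n` strands). -/
def BnSub (n : ℕ) : Subgroup (B1 n) :=
  Subgroup.closure {x : B1 n | ∃ i : ℕ, 1 ≤ i ∧ i ≤ n - 1 ∧ x = sigB n i}

end KnotTypeB

/-!
Let `B_n` act on the free group `F_n` on `x_0, …, x_{n-1}` by Artin's automorphisms: `σ_{i+1}`
sends `x_i ↦ x_{i+1}`, `x_{i+1} ↦ x_{i+1}⁻¹ x_i x_{i+1}` and fixes the other letters. Then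
`t ↦ x_0`, `σ_i ↦ σ_i` respects the relations of `B_{1,n}`, giving `B_{1,n} → F_n ⋊ B_n` with
`t'_i ↦ x_i`. Conversely `x_i ↦ t'_i`, `σ_i ↦ σ_i` is compatible with the action: `σ_{i+1}`
conjugates `t'_i` to `t'_{i+1}` and `t'_{i+1}` to `t'_{i+1}⁻¹ t'_i t'_{i+1}` and commutes with the
other `t'_k`, which follows from the braid and type `B` relations by induction on `i`. The two maps
are mutually inverse, so `B_{1,n} ≅ F_n ⋊ B_n`, and `P_{1,n}` and `B_n` are the images of the two
factors.
-/

section GroupIdentities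

variable {G : Type*} [Group G] {a b t : G}

theorem conj_mul_eq_of_braid (h : a * b * a = b * a * b) : a * b * a * (a * b)⁻¹ = b := by
  rw [h, mul_inv_eq_iff_eq_mul]; group

theorem conj_mul_eq_of_commute (h : Commute b t) : a * b * t * (a * b)⁻¹ = a * t * a⁻¹ := by
  rw [mul_assoc a b t, h.eq]; group

theorem commute_conj_conj_of_braid (hab : a * b * a = b * a * b) (hbt : Commute b t) :
    Commute a (b * (a * t * a⁻¹) * b⁻¹) := by
  have key := hbt.map (MulAut.conj (b * a))
  simp only [MulAut.conj_apply, conj_mul_eq_of_braid hab.symm] at key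
  convert key using 1; group

theorem typeB_rel_conj (hab : a * b * a = b * a * b) (hbt : Commute b t)
    (h : a * t * a * t = t * a * t * a) :
    b * (a * t * a⁻¹) * b * (a * t * a⁻¹) = a * t * a⁻¹ * b * (a * t * a⁻¹) * b := by
  have key := congrArg (MulAut.conj (a * b)) h
  generalize hg : a * b = g at key
  simp only [map_mul, MulAut.conj_apply] at key
  rwa [← hg, conj_mul_eq_of_braid hab, conj_mul_eq_of_commute hbt] at key

theorem conj_conj_of_typeB_rel (h : a * t * a * t = t * a * t * a) :
    a * (a * t * a⁻¹) * a⁻¹ = (a * t * a⁻¹)⁻¹ * t * (a * t * a⁻¹) :=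
  calc _ = (a * t * a⁻¹)⁻¹ * (a * t * a * t) * a⁻¹ * a⁻¹ := by group
    _ = _ := by rw [h]; group

end GroupIdentities

namespace FreeGroup

variable {α : Type*}

theorem mulAut_ext {e f : MulAut (FreeGroup α)} (h : ∀ k, e (of k) = f (of k)) : e = f :=
  MulEquiv.toMonoidHom_injective (ext_hom _ _ h)

variable [DecidableEq α]

def artinGen (a b k : α) : FreeGroup α :=
  if k = a then of b else if k = b then (of b)⁻¹ * of a * of b else of k

def artinInvGen (a b k : α) : FreeGroup α :=
  if k = a then of a * of b * (of a)⁻¹ else if k = b then of a else of k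

theorem lift_artinInvGen_comp_lift_artinGen (a b : α) :
    (lift (artinInvGen a b)).comp (lift (artinGen a b)) = MonoidHom.id _ := by
  ext k
  rcases eq_or_ne k a with rfl | hka
  · rcases eq_or_ne k b with rfl | hkb
    · simp [artinGen, artinInvGen]
    · simp [artinGen, artinInvGen, hkb.symm]
  rcases eq_or_ne k b with rfl | hkb
  · simp [artinGen, artinInvGen, hka, mul_assoc]
  · simp [artinGen, artinInvGen, hka, hkb]

theorem lift_artinGen_comp_lift_artinInvGen (a b : α) :
    (lift (artinGen a b)).comp (lift (artinInvGen a b)) = MonoidHom.id _ := by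
  ext k
  rcases eq_or_ne k a with rfl | hka
  · rcases eq_or_ne k b with rfl | hkb
    · simp [artinGen, artinInvGen]
    · simp [artinGen, artinInvGen, hkb.symm, mul_assoc]
  rcases eq_or_ne k b with rfl | hkb
  · simp [artinGen, artinInvGen, hka]
  · simp [artinGen, artinInvGen, hka, hkb]

def artinAut (a b : α) : MulAut (FreeGroup α) :=
  MonoidHom.toMulEquiv _ _ (lift_artinInvGen_comp_lift_artinGen a b)
    (lift_artinGen_comp_lift_artinInvGen a b)

theorem artinAut_of (a b k : α) : artinAut a b (of k) = artinGen a b k := lift_apply_of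

@[simp] theorem artinAut_of_left (a b : α) : artinAut a b (of a) = of b := by
  simp [artinAut_of, artinGen]

@[simp] theorem artinAut_of_right {a b : α} (hab : a ≠ b) :
    artinAut a b (of b) = (of b)⁻¹ * of a * of b := by
  simp [artinAut_of, artinGen, hab.symm]

@[simp] theorem artinAut_of_of_ne {a b k : α} (ha : k ≠ a) (hb : k ≠ b) :
    artinAut a b (of k) = of k := by
  simp [artinAut_of, artinGen, ha, hb]

theorem artinAut_braid {a b c : α} (hab : a ≠ b) (hbc : b ≠ c) (hac : a ≠ c) :
    artinAut a b * artinAut b c * artinAut a b = artinAut b c * artinAut a b * artinAut b c := by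
  have := hab.symm; have := hbc.symm; have := hac.symm
  refine mulAut_ext fun k => ?_
  rcases eq_or_ne k a with rfl | hka
  · simp [*]
  rcases eq_or_ne k b with rfl | hkb
  · simp [*]
  rcases eq_or_ne k c with rfl | hkc
  · simp [*]; group
  · simp [*]

theorem artinAut_commute {a b c d : α} (hab : a ≠ b) (hcd : c ≠ d) (hac : a ≠ c) (had : a ≠ d)
    (hbc : b ≠ c) (hbd : b ≠ d) : Commute (artinAut a b) (artinAut c d) := by
  have := hab.symm; have := hcd.symm; have := hac.symm; have := had.symm
  have := hbc.symm; have := hbd.symm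
  refine mulAut_ext fun k => ?_
  rcases eq_or_ne k a with rfl | hka
  · simp [*]
  rcases eq_or_ne k b with rfl | hkb
  · simp [*]
  rcases eq_or_ne k c with rfl | hkc
  · simp [*]
  rcases eq_or_ne k d with rfl | hkd
  · simp [*]
  · simp [*]

end FreeGroup


namespace SemidirectProduct

variable {N G H : Type*} [Group N] [Group G] [Group H] {φ : G →* MulAut N}

theorem isComplement'_range_inl_range_inr :
    (inl : N →* N ⋊[φ] G).range.IsComplement' (inr : G →* N ⋊[φ] G).range := by
  refine Subgroup.isComplement'_of_disjoint_and_mul_eq_univ ?_ ?_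
  · rw [Subgroup.disjoint_def]
    rintro _ ⟨x, rfl⟩ ⟨g, hg⟩
    have hx : x = 1 := by simpa using (congrArg left hg).symm
    rw [hx, map_one]
  · refine Set.eq_univ_of_forall fun x => ⟨_, ⟨x.left, rfl⟩, _, ⟨x.right, rfl⟩, ?_⟩
    exact inl_left_mul_inr_right x

theorem normal_range_inl : (inl : N →* N ⋊[φ] G).range.Normal := by
  rw [range_inl_eq_ker_rightHom]; infer_instance

theorem lift_compat_of_closure_eq_top (fn : N →* H) (fg : G →* H) {s : Set G}
    (hs : Subgroup.closure s = ⊤)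
    (h : ∀ g ∈ s, fn.comp (φ g).toMonoidHom = (MulAut.conj (fg g)).toMonoidHom.comp fn) (g : G) :
    fn.comp (φ g).toMonoidHom = (MulAut.conj (fg g)).toMonoidHom.comp fn := by
  suffices ∀ x, fn (φ g x) = fg g * fn x * (fg g)⁻¹ from MonoidHom.ext this
  induction (hs ▸ Subgroup.mem_top g : g ∈ Subgroup.closure s) using Subgroup.closure_induction
    with
  | mem g hg => exact DFunLike.congr_fun (h g hg)
  | one => simp
  | mul a b _ _ ha hb => intro x; simp only [map_mul, MulAut.mul_apply, ha, hb]; group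
  | inv a _ ha =>
    intro x
    have := ha ((φ a)⁻¹ x)
    simp only [MulAut.apply_inv_self] at this
    simp only [map_inv, this]
    group

end SemidirectProduct

theorem Subgroup.IsComplement'.map_mulEquiv {G G' : Type*} [Group G] [Group G']
    {H K : Subgroup G} (h : H.IsComplement' K) (e : G ≃* G') :
    (H.map e.toMonoidHom).IsComplement' (K.map e.toMonoidHom) := by
  refine isComplement'_of_disjoint_and_mul_eq_univ (disjoint_map e.injective h.disjoint) ?_
  simp only [coe_map, MulEquiv.coe_toMonoidHom, ← Set.image_mul, h.mul_eq,
    Set.image_univ_of_surjective e.surjective]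

namespace KnotTypeB

variable {n : ℕ}

open FreeGroup in
def braidRels (m : ℕ) : Set (FreeGroup (Fin m)) :=
  {r | (∃ i j : Fin m, (i : ℕ) + 1 = j ∧ r = of i * of j * of i * (of j * of i * of j)⁻¹) ∨
       (∃ i j : Fin m, (i : ℕ) + 1 < j ∧ r = of i * of j * (of j * of i)⁻¹)}

/-- The Artin braid group on `m + 1` strands. -/
abbrev BraidGroup (m : ℕ) := PresentedGroup (braidRels m)

namespace BraidGroup

variable {m : ℕ} {G : Type*} [Group G]

open PresentedGroup

theorem of_braid {i j : Fin m} (h : (i : ℕ) + 1 = j) :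
    (of i : BraidGroup m) * of j * of i = of j * of i * of j :=
  mk_eq_mk_of_mul_inv_mem (rels := braidRels m) (Or.inl ⟨i, j, h, rfl⟩)

theorem of_commute {i j : Fin m} (h : (i : ℕ) + 1 < j) :
    Commute (of i : BraidGroup m) (of j) :=
  mk_eq_mk_of_mul_inv_mem (rels := braidRels m) (Or.inr ⟨i, j, h, rfl⟩)

def lift (S : Fin m → G)
    (hbraid : ∀ i j : Fin m, (i : ℕ) + 1 = j → S i * S j * S i = S j * S i * S j)
    (hcomm : ∀ i j : Fin m, (i : ℕ) + 1 < j → Commute (S i) (S j)) : BraidGroup m →* G :=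
  toGroup (f := S) <| by
    rintro r (⟨i, j, h, rfl⟩ | ⟨i, j, h, rfl⟩)
    · simp [hbraid i j h]
    · simp [(hcomm i j h).eq]

@[simp] theorem lift_of {S : Fin m → G} {hbraid hcomm} (i : Fin m) :
    lift S hbraid hcomm (of i) = S i := toGroup.of _

end BraidGroup

section liftB1

variable {G : Type*} [Group G] (T : G) (S : Fin (n - 1) → G)

def liftB1 (hbraid : ∀ i j : Fin (n - 1), (i : ℕ) + 1 = j → S i * S j * S i = S j * S i * S j)
    (hcomm : ∀ i j : Fin (n - 1), (i : ℕ) + 1 < j → Commute (S i) (S j))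
    (htypeB : ∀ i : Fin (n - 1), (i : ℕ) = 0 → T * S i * T * S i = S i * T * S i * T)
    (htcomm : ∀ i : Fin (n - 1), 0 < (i : ℕ) → Commute T (S i)) : B1 n →* G :=
  PresentedGroup.toGroup (f := fun x => x.elim T S) <| by
    rintro r (⟨i, j, h, rfl⟩ | ⟨i, j, h, rfl⟩ | ⟨i, h, rfl⟩ | ⟨i, h, rfl⟩)
    · simp [hbraid i j h]
    · simp [(hcomm i j h).eq]
    · simp [htypeB i h]
    · simp [(htcomm i h).eq]

variable {T S} {hbraid hcomm htypeB htcomm}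

@[simp] theorem liftB1_of_none :
    liftB1 T S hbraid hcomm htypeB htcomm (PresentedGroup.of none) = T :=
  PresentedGroup.toGroup.of _

@[simp] theorem liftB1_of_some (i : Fin (n - 1)) :
    liftB1 T S hbraid hcomm htypeB htcomm (PresentedGroup.of (some i)) = S i :=
  PresentedGroup.toGroup.of _

end liftB1

section Relations

open PresentedGroup

theorem of_some_braid {i j : Fin (n - 1)} (h : (i : ℕ) + 1 = j) :
    (of (some i) : B1 n) * of (some j) * of (some i) = of (some j) * of (some i) * of (some j) :=
  mk_eq_mk_of_mul_inv_mem (rels := bRels n) (Or.inl ⟨i, j, h, rfl⟩)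

theorem of_some_commute {i j : Fin (n - 1)} (h : (i : ℕ) + 1 < j) :
    Commute (of (some i) : B1 n) (of (some j)) :=
  mk_eq_mk_of_mul_inv_mem (rels := bRels n) (Or.inr (Or.inl ⟨i, j, h, rfl⟩))

theorem of_typeB {i : Fin (n - 1)} (h : (i : ℕ) = 0) :
    (of none : B1 n) * of (some i) * of none * of (some i) =
      of (some i) * of none * of (some i) * of none :=
  mk_eq_mk_of_mul_inv_mem (rels := bRels n) (Or.inr (Or.inr (Or.inl ⟨i, h, rfl⟩)))

theorem of_none_commute {i : Fin (n - 1)} (h : 0 < (i : ℕ)) :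
    Commute (of none : B1 n) (of (some i)) :=
  mk_eq_mk_of_mul_inv_mem (rels := bRels n) (Or.inr (Or.inr (Or.inr ⟨i, h, rfl⟩)))

end Relations

theorem sigB_succ (i : Fin (n - 1)) : sigB n (i + 1) = PresentedGroup.of (some i) := by
  rw [sigB, dif_pos (by omega)]
  rfl

theorem sigB_of_mem {k : ℕ} (hk : 1 ≤ k) (hkn : k ≤ n - 1) :
    sigB n k = PresentedGroup.of (some ⟨k - 1, by omega⟩) :=
  dif_pos ⟨hk, hkn⟩

theorem sigB_of_not_mem {k : ℕ} (hk : ¬(1 ≤ k ∧ k ≤ n - 1)) : sigB n k = 1 := dif_neg hk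

theorem sigB_braid {k : ℕ} (hk : 1 ≤ k) (hkn : k + 1 ≤ n - 1) :
    sigB n k * sigB n (k + 1) * sigB n k = sigB n (k + 1) * sigB n k * sigB n (k + 1) := by
  rw [sigB_of_mem hk (by omega), sigB_of_mem (k := k + 1) (by omega) hkn]
  exact of_some_braid (by simp; omega)

theorem commute_sigB_sigB {k l : ℕ} (h : k + 1 < l) : Commute (sigB n k) (sigB n l) := by
  by_cases hl : l ≤ n - 1
  · by_cases hk : 1 ≤ k
    · rw [sigB_of_mem hk (by omega), sigB_of_mem (by omega) hl]
      exact of_some_commute (by simp; omega)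
    · rw [sigB_of_not_mem (by omega)]; exact Commute.one_left _
  · rw [sigB_of_not_mem (k := l) (by omega)]; exact Commute.one_right _

theorem commute_tB_sigB {k : ℕ} (hk : 2 ≤ k) : Commute (tB n) (sigB n k) := by
  by_cases hkn : k ≤ n - 1
  · rw [sigB_of_mem (by omega) hkn]
    exact of_none_commute (by simp; omega)
  · rw [sigB_of_not_mem (by omega)]; exact Commute.one_right _

theorem sigB_one_typeB (hn : 1 ≤ n - 1) :
    sigB n 1 * tB n * sigB n 1 * tB n = tB n * sigB n 1 * tB n * sigB n 1 :=
  (sigB_succ ⟨0, hn⟩ ▸ of_typeB rfl).symm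

theorem commute_sigB_tpB_of_add_two_le {j k : ℕ} (h : j + 2 ≤ k) :
    Commute (sigB n k) (tpB n j) := by
  induction j with
  | zero => exact (commute_tB_sigB h).symm
  | succ j ih =>
    have hσ := (commute_sigB_sigB (n := n) (k := j + 1) (l := k) (by omega)).symm
    exact (hσ.mul_right (ih (by omega))).mul_right hσ.inv_right

theorem commute_sigB_tpB_of_lt {j k : ℕ} (hk : 1 ≤ k) (hkj : k < j) (hj : j ≤ n - 1) :
    Commute (sigB n k) (tpB n j) := by
  induction j, hkj using Nat.le_induction with
  | base =>
    obtain ⟨m, rfl⟩ : ∃ m, k = m + 1 := ⟨k - 1, by omega⟩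
    exact commute_conj_conj_of_braid (sigB_braid hk hj) (commute_sigB_tpB_of_add_two_le le_rfl)
  | succ j hkj ih =>
    have hσ := commute_sigB_sigB (n := n) (k := k) (l := j + 1) (by omega)
    exact (hσ.mul_right (ih (by omega))).mul_right hσ.inv_right

theorem tpB_typeB {i : ℕ} (hi : i + 1 ≤ n - 1) :
    sigB n (i + 1) * tpB n i * sigB n (i + 1) * tpB n i =
      tpB n i * sigB n (i + 1) * tpB n i * sigB n (i + 1) := by
  induction i with
  | zero => exact sigB_one_typeB hi
  | succ i ih =>
    exact typeB_rel_conj (sigB_braid (by omega) hi) (commute_sigB_tpB_of_add_two_le le_rfl)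
      (ih (by omega))

theorem sigB_conj_tpB_succ {i : ℕ} (hi : i + 1 ≤ n - 1) :
    sigB n (i + 1) * tpB n (i + 1) * (sigB n (i + 1))⁻¹ =
      (tpB n (i + 1))⁻¹ * tpB n i * tpB n (i + 1) :=
  conj_conj_of_typeB_rel (tpB_typeB hi)

-- The generator `i : Fin (n - 1)` stands for `σ_{i+1}`, exchanging the punctures `i` and `i + 1`.
def lo (i : Fin (n - 1)) : Fin n := ⟨i, by omega⟩

def hi (i : Fin (n - 1)) : Fin n := ⟨i + 1, by omega⟩

@[simp] theorem val_lo (i : Fin (n - 1)) : (lo i : ℕ) = i := rfl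

@[simp] theorem val_hi (i : Fin (n - 1)) : (hi i : ℕ) = i + 1 := rfl

@[simp] theorem lo_ne_hi (i : Fin (n - 1)) : lo i ≠ hi i := Fin.ne_of_val_ne (by simp)

def artinAction (n : ℕ) : BraidGroup (n - 1) →* MulAut (FreeGroup (Fin n)) :=
  BraidGroup.lift (fun i => FreeGroup.artinAut (lo i) (hi i))
    (fun i j h => by
      rw [show lo j = hi i from Fin.ext (by simp [← h])]
      exact FreeGroup.artinAut_braid (lo_ne_hi i) (Fin.ne_of_val_ne (by simp; omega))
        (Fin.ne_of_val_ne (by simp; omega)))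
    (fun i j h => FreeGroup.artinAut_commute (lo_ne_hi i) (lo_ne_hi j)
      (Fin.ne_of_val_ne (by simp; omega)) (Fin.ne_of_val_ne (by simp; omega))
      (Fin.ne_of_val_ne (by simp; omega)) (Fin.ne_of_val_ne (by simp; omega)))

@[simp] theorem artinAction_of (i : Fin (n - 1)) :
    artinAction n (PresentedGroup.of i) = FreeGroup.artinAut (lo i) (hi i) :=
  BraidGroup.lift_of i

abbrev FreeByBraid (n : ℕ) := FreeGroup (Fin n) ⋊[artinAction n] BraidGroup (n - 1)

open SemidirectProduct in
def toSemidirect (hn : 1 ≤ n) : B1 n →* FreeByBraid n :=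
  liftB1 (inl (FreeGroup.of ⟨0, hn⟩)) (fun i => inr (PresentedGroup.of i))
    (fun i j h => by simp only [← map_mul, BraidGroup.of_braid h])
    (fun i j h => (BraidGroup.of_commute h).map inr)
    (fun i h => by
      have h0 : lo i = ⟨0, hn⟩ := Fin.ext h
      ext <;> simp [← h0, mul_assoc])
    (fun i h => by
      have h0 : (⟨0, hn⟩ : Fin n) ≠ lo i := Fin.ne_of_val_ne (by simp; omega)
      have h1 : (⟨0, hn⟩ : Fin n) ≠ hi i := Fin.ne_of_val_ne (by simp)
      ext <;> simp [h0, h1])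

@[simp] theorem toSemidirect_of_none (hn : 1 ≤ n) :
    toSemidirect hn (PresentedGroup.of none) = SemidirectProduct.inl (FreeGroup.of ⟨0, hn⟩) :=
  liftB1_of_none

@[simp] theorem toSemidirect_of_some (hn : 1 ≤ n) (i : Fin (n - 1)) :
    toSemidirect hn (PresentedGroup.of (some i)) = SemidirectProduct.inr (PresentedGroup.of i) :=
  liftB1_of_some i

theorem toSemidirect_tpB (hn : 1 ≤ n) {j : ℕ} (hj : j < n) :
    toSemidirect hn (tpB n j) = SemidirectProduct.inl (FreeGroup.of ⟨j, hj⟩) := by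
  induction j with
  | zero => exact toSemidirect_of_none hn
  | succ j ih =>
    rw [tpB, sigB_succ ⟨j, by omega⟩, map_mul, map_mul, ih (by omega), map_inv,
      toSemidirect_of_some, ← map_inv, ← SemidirectProduct.inl_aut, artinAction_of]
    exact congrArg _ (FreeGroup.artinAut_of_left _ _)

def tpLift (n : ℕ) : FreeGroup (Fin n) →* B1 n := FreeGroup.lift fun i => tpB n i

@[simp] theorem tpLift_of (k : Fin n) : tpLift n (FreeGroup.of k) = tpB n k :=
  FreeGroup.lift_apply_of

def sigHom (n : ℕ) : BraidGroup (n - 1) →* B1 n :=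
  BraidGroup.lift (fun i => sigB n (i + 1))
    (fun i j h => by rw [← h]; exact sigB_braid (by omega) (by omega))
    (fun i j h => commute_sigB_sigB (by omega))

@[simp] theorem sigHom_of (i : Fin (n - 1)) : sigHom n (PresentedGroup.of i) = sigB n (i + 1) :=
  BraidGroup.lift_of i

theorem tpLift_artinAut (i : Fin (n - 1)) (k : Fin n) :
    tpLift n (FreeGroup.artinAut (lo i) (hi i) (FreeGroup.of k)) =
      sigB n (i + 1) * tpB n k * (sigB n (i + 1))⁻¹ := by
  rcases eq_or_ne k (lo i) with rfl | hlo
  · simp [tpB]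
  rcases eq_or_ne k (hi i) with rfl | hhi
  · simpa using (sigB_conj_tpB_succ (by omega)).symm
  have hlo' : (k : ℕ) ≠ i := by simpa using Fin.val_ne_of_ne hlo
  have hhi' : (k : ℕ) ≠ i + 1 := by simpa using Fin.val_ne_of_ne hhi
  have hc : Commute (sigB n (i + 1)) (tpB n k) := by
    rcases Nat.lt_or_gt_of_ne hlo' with hk | hk
    · exact commute_sigB_tpB_of_add_two_le (by omega)
    · exact commute_sigB_tpB_of_lt (by omega) (by omega) (by omega)
  simp [FreeGroup.artinAut_of_of_ne hlo hhi, hc.eq]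

open SemidirectProduct in
def ofSemidirect : FreeByBraid n →* B1 n :=
  lift (tpLift n) (sigHom n) <|
    lift_compat_of_closure_eq_top _ _ (PresentedGroup.closure_range_of _) <| by
      rintro _ ⟨i, rfl⟩
      exact FreeGroup.ext_hom _ _ fun k => by simpa using tpLift_artinAut i k

open SemidirectProduct

theorem ofSemidirect_comp_inl : ofSemidirect.comp inl = tpLift n := lift_comp_inl _ _ _

theorem ofSemidirect_comp_inr : ofSemidirect.comp inr = sigHom n := lift_comp_inr _ _ _

theorem ofSemidirect_comp_toSemidirect (hn : 1 ≤ n) :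
    ofSemidirect.comp (toSemidirect hn) = MonoidHom.id (B1 n) := by
  ext (_ | i)
  · simp [ofSemidirect, tpB, tB]
  · simp [ofSemidirect, sigB_succ]

theorem toSemidirect_comp_ofSemidirect (hn : 1 ≤ n) :
    (toSemidirect hn).comp ofSemidirect = MonoidHom.id (FreeByBraid n) := by
  refine hom_ext (FreeGroup.ext_hom _ _ fun k => ?_) (PresentedGroup.ext fun i => ?_)
  · simp [ofSemidirect, toSemidirect_tpB hn k.isLt]
  · simp [ofSemidirect, sigB_succ]

def semidirectEquiv (hn : 1 ≤ n) : FreeByBraid n ≃* B1 n :=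
  ofSemidirect.toMulEquiv (toSemidirect hn) (toSemidirect_comp_ofSemidirect hn)
    (ofSemidirect_comp_toSemidirect hn)

theorem range_tpLift : (tpLift n).range = Pn n :=
  FreeGroup.range_lift_eq_closure

theorem range_sigHom : (sigHom n).range = BnSub n := by
  rw [MonoidHom.range_eq_map, ← PresentedGroup.closure_range_of, MonoidHom.map_closure,
    ← Set.range_comp, BnSub]
  congr 1
  ext x
  simp only [Set.mem_range, Function.comp_apply, sigHom_of, Set.mem_ofPred_eq]
  constructor
  · rintro ⟨i, rfl⟩
    exact ⟨i + 1, by omega, by omega, rfl⟩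
  · rintro ⟨k, hk, hkn, rfl⟩
    exact ⟨⟨k - 1, by omega⟩, by congr 1; simp; omega⟩

/-- `P_{1,n}` is a normal subgroup of `B_{1,n}`; it is free, freely
generated by `t, t'_1, …, t'_{n-1}` (i.e. the homomorphism from the free group on `n`
letters sending the `i`-th letter to `t'_i` is injective with image `P_{1,n}`); and
`B_{1,n} = P_{1,n} ⋊ B_n` is an internal semidirect product: every `w ∈ B_{1,n}` is
uniquely a product `w = v · σ` with `v ∈ P_{1,n}` and `σ ∈ B_n`. -/
theorem statement_0 (n : ℕ) (hn : 1 ≤ n) :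
    (Pn n).Normal ∧
    Function.Injective ⇑(FreeGroup.lift fun i : Fin n => tpB n (i : ℕ)) ∧
    MonoidHom.range (FreeGroup.lift fun i : Fin n => tpB n (i : ℕ)) = Pn n ∧
    ∀ w : B1 n, ∃! p : Pn n × BnSub n, w = (p.1 : B1 n) * (p.2 : B1 n) := by
  have hP : (inl.range).map ofSemidirect = Pn n := by
    rw [MonoidHom.map_range, ofSemidirect_comp_inl, range_tpLift]
  have hB : (inr.range).map ofSemidirect = BnSub n := by
    rw [MonoidHom.map_range, ofSemidirect_comp_inr, range_sigHom]
  have hcompl : (Pn n).IsComplement' (BnSub n) := by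
    rw [← hP, ← hB]
    exact isComplement'_range_inl_range_inr.map_mulEquiv (semidirectEquiv hn)
  refine ⟨?_, ?_, range_tpLift, fun w => ?_⟩
  · rw [← hP]
    exact normal_range_inl.map _ (semidirectEquiv hn).surjective
  · show Function.Injective (tpLift n)
    rw [← ofSemidirect_comp_inl]
    exact (semidirectEquiv hn).injective.comp inl_injective
  · obtain ⟨p, hp, huniq⟩ := hcompl.existsUnique w
    exact ⟨p, hp.symm, fun q hq => huniq q hq.symm⟩

end KnotTypeB
end

section
/- In H_n(q,∞) (and likewise in H_n(q,d)), for k ∈ ℕ and ε ∈ {+1, −1}: (i) t^ε g_1^ε t^{εk} g_1^ε = g_1^ε t^{εk} g_1^ε t^ε + (q^ε − 1) t^ε g_1^ε t^{εk} + (1 − q^ε) t^{εk} g_1^ε t^ε; and (ii) t^{−ε} g_1^ε t^{εk} g_1^ε = g_1^ε t^{εk} g_1^ε t^{−ε} + (q^ε − 1) t^{ε(k−1)} g_1^ε + (1 − q^ε) g_1^ε t^{ε(k−1)}. -/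
/-!
Knot theory related to generalized and cyclotomic Hecke algebras of type B
(S. Lambropoulou). Generic setting: an algebra containing invertible elements
`t, g_1, …, g_m` and a central invertible parameter `q` satisfying the defining
relations of the generalized type-`B` Hecke algebra `H_{m+1}(q,∞)`; both
`H_{m+1}(q,∞)` and the cyclotomic algebras `H_{m+1}(q,d)` are instances.
-/

namespace KnotTypeB

variable {A : Type*} [Ring A]

/-- The ascending word `g_i^e g_{i+1}^e ⋯ g_j^e` (the empty product `1` if `j + 1 ≤ i`). -/
def ascW (g : ℕ → Aˣ) (e : ℤ) (i j : ℕ) : A :=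
  ((List.range' i (j + 1 - i)).map fun l => ((g l ^ e : Aˣ) : A)).prod

/-- The descending word `g_j^e g_{j-1}^e ⋯ g_i^e` (the empty product `1` if `j + 1 ≤ i`). -/
def descW (g : ℕ → Aˣ) (e : ℤ) (j i : ℕ) : A :=
  ((List.range' i (j + 1 - i)).reverse.map fun l => ((g l ^ e : Aˣ) : A)).prod

/-- The palindromic word `g_i^e g_{i+1}^e ⋯ g_{m-1}^e g_m^e g_{m-1}^e ⋯ g_i^e`
(interpreted as `1` when `m < i`). -/
def palW (g : ℕ → Aˣ) (e : ℤ) (i m : ℕ) : A :=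
  ascW g e i m * descW g e (m - 1) i

/-- `t_i = g_i g_{i-1} ⋯ g_1 t g_1 ⋯ g_{i-1} g_i` (as a unit), `t_0 = t`. -/
def tW (g : ℕ → Aˣ) (t : Aˣ) : ℕ → Aˣ
  | 0 => t
  | i + 1 => g (i + 1) * tW g t i * g (i + 1)

/-- `t'_i = g_i g_{i-1} ⋯ g_1 t g_1⁻¹ ⋯ g_{i-1}⁻¹ g_i⁻¹` (as a unit), `t'_0 = t`. -/
def tpW (g : ℕ → Aˣ) (t : Aˣ) : ℕ → Aˣ
  | 0 => t
  | i + 1 => g (i + 1) * tpW g t i * (g (i + 1))⁻¹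

/-- `T_i^k = g_i g_{i-1} ⋯ g_1 t^k g_1 ⋯ g_{i-1} g_i` (as a unit), `T_0^k = t^k`. -/
def TTW (g : ℕ → Aˣ) (t : Aˣ) (k : ℤ) : ℕ → Aˣ
  | 0 => t ^ k
  | i + 1 => g (i + 1) * TTW g t k i * g (i + 1)

/-- The defining relations of the generalized Iwahori–Hecke algebra of type `B` with
invertible generators `t, g_1, …, g_m` and a central invertible parameter `q`:
the type-`B` braid relations together with the quadratic relations
`g_i² = (q-1)g_i + q`.  Any ring admitting such elements is (the image of) a
`ℤ[q^{±1}]`-algebra quotient of `H_{m+1}(q,∞)`; in particular the cyclotomic algebras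
`H_{m+1}(q,d)` also satisfy these hypotheses. -/
def HeckeRels (q t : Aˣ) (g : ℕ → Aˣ) (m : ℕ) : Prop :=
  (∀ a : A, (q : A) * a = a * (q : A)) ∧
  (∀ i, 1 ≤ i → i + 1 ≤ m → (g i : A) * g (i + 1) * g i = (g (i + 1) : A) * g i * g (i + 1)) ∧
  (∀ i j, 1 ≤ i → i + 1 < j → j ≤ m → (g i : A) * g j = (g j : A) * g i) ∧
  (1 ≤ m → (t : A) * g 1 * t * g 1 = (g 1 : A) * t * g 1 * t) ∧
  (∀ i, 2 ≤ i → i ≤ m → (t : A) * g i = (g i : A) * t) ∧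
  (∀ i, 1 ≤ i → i ≤ m → (g i : A) ^ 2 = ((q : A) - 1) * g i + (q : A))


lemma core (Q T Ti G Gi Tk Tkm : A)
    (hq : ∀ a : A, Q * a = a * Q)
    (hGiG : Gi * G = 1) (hGGi : G * Gi = 1)
    (hTiT : Ti * T = 1) (hTTi : T * Ti = 1)
    (hTkTi : Tk * Ti = Tkm) (hTiTk : Ti * Tk = Tkm)
    (hcomm : (G * T * G) * Tk = Tk * (G * T * G))
    (hGG : G * G = (Q - 1) * G + Q) :
    (T * G * Tk * G = G * Tk * G * T + (Q - 1) * (T * G * Tk) + (1 - Q) * (Tk * G * T)) ∧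
    (Ti * G * Tk * G = G * Tk * G * Ti + (Q - 1) * (Tkm * G) + (1 - Q) * (G * Tkm)) := by
  have hQ1 : ∀ a : A, (Q - 1) * a = a * (Q - 1) := fun a => by
    rw [sub_mul, mul_sub, hq, one_mul, mul_one]
  have hpull : ∀ a b : A, a * ((Q - 1) * b) = (Q - 1) * (a * b) := fun a b => by
    rw [← mul_assoc, ← hQ1, mul_assoc]
  have hpullQ : ∀ a b : A, a * (Q * b) = Q * (a * b) := fun a b => by
    rw [← mul_assoc, ← hq, mul_assoc]
  have hQGi : Q * Gi = G - Q + 1 := by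
    have h1 : G * G * Gi = ((Q - 1) * G + Q) * Gi := by rw [hGG]
    rw [mul_assoc, hGGi, mul_one, add_mul, mul_assoc, hGGi, mul_one] at h1
    rw [h1]; noncomm_ring
  have part1 : T * G * Tk * G = G * Tk * G * T + (Q - 1) * (T * G * Tk) + (1 - Q) * (Tk * G * T) := by
    have e1 : T * G * Tk * G = Gi * ((G * T * G) * Tk) * G := by
      simp only [← mul_assoc, hGiG, one_mul]
    have e2 : Gi * ((G * T * G) * Tk) * G = Gi * (Tk * (G * (T * (G * G)))) := by
      rw [hcomm]; simp only [mul_assoc]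
    have e3 : Gi * (Tk * (G * (T * (G * G)))) =
        (Q - 1) * (Gi * ((G * T * G) * Tk)) + (Q * Gi) * (Tk * (G * T)) := by
      rw [hGG]
      simp only [mul_add, hpull, hpullQ, ← hq]
      have hx : Tk * (G * (T * G)) = G * T * G * Tk := by
        rw [hcomm]; simp only [mul_assoc]
      rw [hx, mul_assoc Q Gi]
    have e4 : Gi * ((G * T * G) * Tk) = T * G * Tk := by
      simp only [← mul_assoc, hGiG, one_mul]
    rw [e1, e2, e3, e4, hQGi]
    noncomm_ring
  refine ⟨part1, ?_⟩
  have h2 : G * Tk * G * Ti = Ti * G * Tk * G + (Q - 1) * (G * Tkm) + (1 - Q) * (Tkm * G) := by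
    have f1 : G * Tk * G * Ti = Ti * (T * G * Tk * G) * Ti := by
      simp only [← mul_assoc, hTiT, one_mul, hTiTk]
    rw [f1, part1]
    simp only [mul_add, add_mul, hpull]
    have hpull1 : ∀ a b : A, a * ((1 - Q) * b) = (1 - Q) * (a * b) := fun a b => by
      have : ∀ c : A, (1 - Q) * c = c * (1 - Q) := fun c => by
        rw [sub_mul, mul_sub, hq, one_mul, mul_one]
      rw [← mul_assoc, ← this, mul_assoc]
    simp only [hpull1]
    simp only [mul_assoc, hTTi, mul_one, hTkTi]
    simp only [← mul_assoc, hTiT, one_mul, hTiTk]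
  rw [h2]; noncomm_ring


lemma central_inv (q : Aˣ) (hq : ∀ a : A, (q : A) * a = a * q) :
    ∀ a : A, ((q⁻¹ : Aˣ) : A) * a = a * ((q⁻¹ : Aˣ) : A) := by
  intro a
  have h := congrArg (fun x => ((q⁻¹ : Aˣ) : A) * x * ((q⁻¹ : Aˣ) : A)) (hq a)
  simpa [mul_assoc, Units.inv_mul, Units.mul_inv, ← mul_assoc] using h.symm

lemma quad_inv (q g : Aˣ) (hq : ∀ a : A, (q : A) * a = a * q)
    (hGG : (g : A) * g = ((q : A) - 1) * g + q) :
    ((g⁻¹ : Aˣ) : A) * ((g⁻¹ : Aˣ) : A) =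
      (((q⁻¹ : Aˣ) : A) - 1) * ((g⁻¹ : Aˣ) : A) + ((q⁻¹ : Aˣ) : A) := by
  set G : A := (g : A)
  set Gi : A := ((g⁻¹ : Aˣ) : A)
  set Q : A := (q : A)
  set Qi : A := ((q⁻¹ : Aˣ) : A)
  have hGiG : Gi * G = 1 := g.inv_mul  -- maybe wrong name
  have hGGi : G * Gi = 1 := g.mul_inv
  have hQiQ : Qi * Q = 1 := q.inv_mul
  have hqi := central_inv q hq
  -- 1 = (Q-1)*Gi + Q*(Gi*Gi)
  have h1 : (1 : A) = (Q - 1) * Gi + Q * (Gi * Gi) := by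
    have h := congrArg (fun x => Gi * x * Gi) hGG
    simp only [add_mul, mul_add] at h
    calc (1 : A) = Gi * (G * G) * Gi := by
          rw [← mul_assoc, hGiG, one_mul, hGGi]
      _ = Gi * ((Q - 1) * G) * Gi + Gi * Q * Gi := by
          exact h
      _ = (Q - 1) * Gi + Q * (Gi * Gi) := by
          have e1 : Gi * ((Q - 1) * G) * Gi = (Q - 1) * Gi := by
            have : Gi * ((Q - 1) * G) = (Q - 1) * (Gi * G) := by
              rw [← mul_assoc]
              have : Gi * (Q - 1) = (Q - 1) * Gi := by
                rw [mul_sub, sub_mul, ← hq, mul_one, one_mul]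
              rw [this, mul_assoc]
            rw [this, hGiG, mul_one]
          have e2 : Gi * Q * Gi = Q * (Gi * Gi) := by rw [← hq, mul_assoc]
          rw [e1, e2]
  have h2 := congrArg (fun x => Qi * x) h1
  simp only [mul_add, mul_one] at h2
  rw [← mul_assoc Qi Q, hQiQ, one_mul, ← mul_assoc Qi] at h2
  have hQi1 : Qi * (Q - 1) = 1 - Qi := by
    rw [mul_sub, hQiQ, mul_one]
  rw [hQi1] at h2
  -- h2 : Qi = (1 - Qi) * Gi + Gi * Gi
  have h3 : Gi * Gi = Qi - (1 - Qi) * Gi :=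
    eq_sub_of_add_eq (by rw [add_comm]; exact h2.symm)
  rw [h3]; noncomm_ring


/-- Lemma 4.  In `H_n(q,∞)` (and likewise in `H_n(q,d)`),
for `k ∈ ℕ` and `ε ∈ {+1, -1}`:
(i) `t^ε g_1^ε t^{εk} g_1^ε = g_1^ε t^{εk} g_1^ε t^ε + (q^ε-1) t^ε g_1^ε t^{εk}
      + (1-q^ε) t^{εk} g_1^ε t^ε`;
(ii) `t^{-ε} g_1^ε t^{εk} g_1^ε = g_1^ε t^{εk} g_1^ε t^{-ε} + (q^ε-1) t^{ε(k-1)} g_1^ε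
      + (1-q^ε) g_1^ε t^{ε(k-1)}`. -/
theorem statement_11 {A : Type*} [Ring A] (q t : Aˣ) (g : ℕ → Aˣ) (n : ℕ) (hn : 2 ≤ n)
    (hrel : HeckeRels q t g (n - 1)) (e : ℤ) (he : e = 1 ∨ e = -1) (k : ℕ) :
    (((t ^ e : Aˣ) : A) * ((g 1 ^ e : Aˣ) : A) * ((t ^ (e * (k : ℤ)) : Aˣ) : A) *
        ((g 1 ^ e : Aˣ) : A) =
      ((g 1 ^ e : Aˣ) : A) * ((t ^ (e * (k : ℤ)) : Aˣ) : A) * ((g 1 ^ e : Aˣ) : A) *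
          ((t ^ e : Aˣ) : A) +
        (((q ^ e : Aˣ) : A) - 1) *
          (((t ^ e : Aˣ) : A) * ((g 1 ^ e : Aˣ) : A) * ((t ^ (e * (k : ℤ)) : Aˣ) : A)) +
        (1 - ((q ^ e : Aˣ) : A)) *
          (((t ^ (e * (k : ℤ)) : Aˣ) : A) * ((g 1 ^ e : Aˣ) : A) * ((t ^ e : Aˣ) : A))) ∧
    (((t ^ (-e) : Aˣ) : A) * ((g 1 ^ e : Aˣ) : A) * ((t ^ (e * (k : ℤ)) : Aˣ) : A) *
        ((g 1 ^ e : Aˣ) : A) =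
      ((g 1 ^ e : Aˣ) : A) * ((t ^ (e * (k : ℤ)) : Aˣ) : A) * ((g 1 ^ e : Aˣ) : A) *
          ((t ^ (-e) : Aˣ) : A) +
        (((q ^ e : Aˣ) : A) - 1) *
          (((t ^ (e * ((k : ℤ) - 1)) : Aˣ) : A) * ((g 1 ^ e : Aˣ) : A)) +
        (1 - ((q ^ e : Aˣ) : A)) *
          (((g 1 ^ e : Aˣ) : A) * ((t ^ (e * ((k : ℤ) - 1)) : Aˣ) : A))) := by
  obtain ⟨hq, -, -, hbr, -, hquad⟩ := hrel
  have hm : 1 ≤ n - 1 := by omega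
  have hb : (t : A) * g 1 * t * g 1 = (g 1 : A) * t * g 1 * t := hbr hm
  have hGG : (g 1 : A) * g 1 = ((q : A) - 1) * g 1 + q := by
    rw [← pow_two]; exact hquad 1 le_rfl hm
  have hbU : t * g 1 * t * g 1 = g 1 * t * g 1 * t :=
    Units.ext (by simpa only [Units.val_mul] using hb)
  rcases he with rfl | rfl
  · simp only [zpow_one, one_mul, zpow_neg_one]
    have hcb : Commute ((g 1 : A) * t * g 1) (t : A) := by
      show ((g 1 : A) * t * g 1) * t = (t : A) * ((g 1 : A) * t * g 1)
      simp only [← mul_assoc]; exact hb.symm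
    have hTk : ((t ^ (k : ℤ) : Aˣ) : A) = ((t : Aˣ) : A) ^ k := by
      rw [zpow_natCast, Units.val_pow_eq_pow_val]
    refine core (q : A) (t : A) ((t⁻¹ : Aˣ) : A) ((g 1 : Aˣ) : A) (((g 1)⁻¹ : Aˣ) : A)
      ((t ^ (k : ℤ) : Aˣ) : A) ((t ^ ((k : ℤ) - 1) : Aˣ) : A) hq
      ((g 1).inv_mul) ((g 1).mul_inv) t.inv_mul t.mul_inv
      ?_ ?_ ?_ hGG
    · rw [← Units.val_mul, zpow_sub_one]
    · exact congrArg Units.val (show t⁻¹ * t ^ (k : ℤ) = t ^ ((k : ℤ) - 1) by group)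
    · rw [hTk]; exact hcb.pow_right k
  · simp only [zpow_neg_one, neg_neg, zpow_one, neg_mul, one_mul]
    have hb' : ((t⁻¹ : Aˣ) : A) * ((g 1)⁻¹ : Aˣ) * ((t⁻¹ : Aˣ) : A) * ((g 1)⁻¹ : Aˣ) =
        (((g 1)⁻¹ : Aˣ) : A) * ((t⁻¹ : Aˣ) : A) * ((g 1)⁻¹ : Aˣ) * ((t⁻¹ : Aˣ) : A) := by
      have h2 : t⁻¹ * (g 1)⁻¹ * t⁻¹ * (g 1)⁻¹ = (g 1)⁻¹ * t⁻¹ * (g 1)⁻¹ * t⁻¹ := by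
        have := congrArg (·⁻¹) hbU
        simpa only [mul_inv_rev, mul_assoc] using this.symm
      simpa only [Units.val_mul] using congrArg Units.val h2
    have hcb : Commute ((((g 1)⁻¹ : Aˣ) : A) * ((t⁻¹ : Aˣ) : A) * ((g 1)⁻¹ : Aˣ))
        ((t⁻¹ : Aˣ) : A) := by
      show _ * _ = _ * _
      simp only [← mul_assoc]; exact hb'.symm
    have hTk : ((t ^ (-(k : ℤ)) : Aˣ) : A) = ((t⁻¹ : Aˣ) : A) ^ k := by
      rw [← Units.val_pow_eq_pow_val]
      exact congrArg Units.val (show t ^ (-(k : ℤ)) = t⁻¹ ^ k by group)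
    refine core ((q⁻¹ : Aˣ) : A) ((t⁻¹ : Aˣ) : A) (t : A) (((g 1)⁻¹ : Aˣ) : A)
      ((g 1 : Aˣ) : A) ((t ^ (-(k : ℤ)) : Aˣ) : A) ((t ^ (-((k : ℤ) - 1)) : Aˣ) : A)
      (central_inv q hq)
      ((g 1).mul_inv) ((g 1).inv_mul) t.mul_inv t.inv_mul
      ?_ ?_ ?_ (quad_inv q (g 1) hq hGG)
    · exact congrArg Units.val
        (show t ^ (-(k : ℤ)) * t = t ^ (-((k : ℤ) - 1)) by group)
    · exact congrArg Units.val
        (show t * t ^ (-(k : ℤ)) = t ^ (-((k : ℤ) - 1)) by group)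
    · rw [hTk]; exact hcb.pow_right k


end KnotTypeB
end

section
/- (Fundamental Lemma) In H_n(q,∞) (and likewise in H_n(q,d)), for i, k ∈ ℕ and ε ∈ {+1, −1}: (i) t^{εi} g_1^ε t^{εk} g_1^ε = g_1^ε t^{εk} g_1^ε t^{εi} + (q^ε − 1) · Σ_{j=1}^{i} t^{εj} g_1^ε t^{ε(k+i−j)} + (1 − q^ε) · Σ_{j=0}^{i−1} t^{ε(k+j)} g_1^ε t^{ε(i−j)}; and (ii) t^{−εi} g_1^ε t^{εk} g_1^ε = g_1^ε t^{εk} g_1^ε t^{−εi} + (q^ε − 1) · Σ_{j=1}^{i} t^{ε(k−j)} g_1^ε t^{−ε(i−j)} + (1 − q^ε) · Σ_{j=1}^{i} t^{−ε(i−j)} g_1^ε t^{ε(k−j)}. -/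
/-!
Knot theory related to generalized and cyclotomic Hecke algebras of type B
(S. Lambropoulou). Generic setting: an algebra containing invertible elements
`t, g_1, …, g_m` and a central invertible parameter `q` satisfying the defining
relations of the generalized type-`B` Hecke algebra `H_{m+1}(q,∞)`; both
`H_{m+1}(q,∞)` and the cyclotomic algebras `H_{m+1}(q,d)` are instances.
-/

namespace KnotTypeB

variable {A : Type*} [Ring A]

/-!
Put `X = γ τ^m γ` with `τ = t^ε`, `γ = g_1^ε`, `Q = q^ε`. Since `γτγ` commutes with `τ` (braid
relation) and `γ = (Q - 1) + Qγ⁻¹` (quadratic relation), the commutator `⁅τ, X⁆` equals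
`(Q - 1)(τγτ^m - τ^mγτ)`. Expanding `⁅τ^{±i}, X⁆` as a sum of terms `τ^a ⁅τ, X⁆ τ^b` gives both
formulas. The relations are invariant under `(q, t, g_1) ↦ (q⁻¹, t⁻¹, g_1⁻¹)`, so the
case `ε = -1` is the case `ε = 1` for the inverted generators.
-/

open Finset

theorem lie_pow_left (a x : A) (n : ℕ) :
    ⁅a ^ n, x⁆ = ∑ j ∈ range n, a ^ j * ⁅a, x⁆ * a ^ (n - 1 - j) := by
  induction n with
  | zero => simp [Ring.lie_def]
  | succ n ih =>
    calc ⁅a ^ (n + 1), x⁆ = a * ⁅a ^ n, x⁆ + ⁅a, x⁆ * a ^ n := by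
          simp only [Ring.lie_def, pow_succ']; noncomm_ring
      _ = _ := by
        rw [ih, mul_sum, sum_range_succ']
        simp only [pow_succ', mul_assoc, pow_zero, one_mul, Nat.add_sub_cancel, Nat.sub_zero]
        congr 1
        refine sum_congr rfl fun j _ => ?_
        rw [Nat.sub_sub, Nat.add_comm 1 j]

theorem lie_units_inv_left (u : Aˣ) (x : A) :
    ⁅(↑u⁻¹ : A), x⁆ = -(↑u⁻¹ * ⁅(u : A), x⁆ * ↑u⁻¹) := by
  simp only [Ring.lie_def, mul_sub, sub_mul, ← mul_assoc, Units.inv_mul, one_mul]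
  simp only [mul_assoc, Units.mul_inv, mul_one]
  abel

theorem lie_units_zpow_natCast_left (u : Aˣ) (x : A) (n : ℕ) :
    ⁅(↑(u ^ (n : ℤ)) : A), x⁆ =
      ∑ j ∈ range n, ↑(u ^ (j : ℤ)) * ⁅(u : A), x⁆ * ↑(u ^ ((n : ℤ) - (j + 1))) := by
  rw [zpow_natCast, Units.val_pow_eq_pow_val, lie_pow_left]
  refine sum_congr rfl fun j hj => ?_
  have hjn : (n : ℤ) - (j + 1) = ((n - 1 - j : ℕ) : ℤ) := by
    have := mem_range.mp hj; omega
  rw [hjn, zpow_natCast, zpow_natCast, Units.val_pow_eq_pow_val, Units.val_pow_eq_pow_val]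

theorem lie_units_zpow_neg_natCast_left (u : Aˣ) (x : A) (n : ℕ) :
    ⁅(↑(u ^ (-(n : ℤ))) : A), x⁆ =
      -∑ j ∈ range n, ↑(u ^ (-((j : ℤ) + 1))) * ⁅(u : A), x⁆ * ↑(u ^ (-((n : ℤ) - j))) := by
  rw [zpow_neg, ← inv_zpow, lie_units_zpow_natCast_left, lie_units_inv_left, ← sum_neg_distrib]
  refine sum_congr rfl fun j _ => ?_
  simp only [mul_neg, neg_mul, ← mul_assoc]
  rw [← Units.val_mul, mul_assoc _ (↑u⁻¹ : A), ← Units.val_mul]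
  congr 4 <;> group

structure IsHeckeB2 (Q τ γ : Aˣ) : Prop where
  central : ∀ a : A, Commute (Q : A) a
  braid : τ * γ * τ * γ = γ * τ * γ * τ
  /-- The quadratic relation `γ² = (Q - 1)γ + Q`, multiplied on the right by `γ⁻¹`. -/
  quadratic : (γ : A) = (Q - 1) + Q * ↑γ⁻¹

theorem HeckeRels.isHeckeB2 {q t : Aˣ} {g : ℕ → Aˣ} {m : ℕ}
    (hrel : HeckeRels q t g m) (hm : 1 ≤ m) : IsHeckeB2 q t (g 1) where
  central := hrel.1
  braid := Units.ext (by simpa using hrel.2.2.2.1 hm)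
  quadratic := by
    have hsq := hrel.2.2.2.2.2 1 le_rfl hm
    calc (g 1 : A) = (g 1 : A) ^ 2 * ↑(g 1)⁻¹ := by rw [sq, mul_assoc, Units.mul_inv, mul_one]
      _ = _ := by rw [hsq, add_mul, mul_assoc, Units.mul_inv, mul_one]

namespace IsHeckeB2

variable {Q τ γ : Aˣ}

theorem inv (h : IsHeckeB2 Q τ γ) : IsHeckeB2 Q⁻¹ τ⁻¹ γ⁻¹ where
  central a := (h.central a).units_inv_left
  braid := by simpa only [mul_inv_rev, mul_assoc] using congrArg Inv.inv h.braid.symm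
  quadratic := by
    have hq := congrArg ((↑Q⁻¹ : A) * ·) h.quadratic
    simp only [mul_add, mul_sub, ← mul_assoc, Units.inv_mul, one_mul, mul_one] at hq
    rw [inv_inv, hq]
    abel

theorem commute_sub_one (h : IsHeckeB2 Q τ γ) (a : A) : Commute ((Q : A) - 1) a :=
  (h.central a).sub_left (Commute.one_left a)

theorem lie_mul_zpow_mul (h : IsHeckeB2 Q τ γ) (m : ℤ) :
    ⁅(τ : A), (γ : A) * ↑(τ ^ m) * γ⁆ =
      (Q - 1) * (τ * γ * ↑(τ ^ m) - ↑(τ ^ m) * γ * (τ : A)) := by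
  have hcomm : Commute (γ * τ * γ) (τ ^ m) :=
    Commute.zpow_right (by simpa only [Commute, SemiconjBy, mul_assoc] using h.braid.symm) m
  have hconj : (τ : A) * γ * ↑(τ ^ m) * ↑γ⁻¹ = ↑γ⁻¹ * ↑(τ ^ m) * γ * τ := by
    simp only [← Units.val_mul]
    congr 1
    calc τ * γ * τ ^ m * γ⁻¹ = γ⁻¹ * ((γ * τ * γ) * τ ^ m) * γ⁻¹ := by group
      _ = γ⁻¹ * τ ^ m * γ * τ := by rw [hcomm.eq]; group
  have hQinv : (Q : A) * ↑γ⁻¹ = γ - (Q - 1) := by rw [h.quadratic]; abel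
  calc ⁅(τ : A), (γ : A) * ↑(τ ^ m) * γ⁆
      = ((τ : A) * γ * ↑(τ ^ m)) * ((Q - 1) + Q * ↑γ⁻¹) - γ * ↑(τ ^ m) * γ * τ := by
        rw [Ring.lie_def, ← h.quadratic]; noncomm_ring
    _ = (Q - 1) * ((τ : A) * γ * ↑(τ ^ m)) + Q * ((τ : A) * γ * ↑(τ ^ m) * ↑γ⁻¹) -
          γ * ↑(τ ^ m) * γ * τ := by
        rw [mul_add, (h.commute_sub_one _).eq, ← mul_assoc _ (Q : A),
          ← (h.central _).eq, mul_assoc (Q : A)]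
    _ = _ := by
        rw [hconj]
        simp only [← mul_assoc]
        rw [hQinv]
        noncomm_ring

theorem zpow_mul_lie_mul_zpow (h : IsHeckeB2 Q τ γ) (m a b : ℤ) :
    (↑(τ ^ a) : A) * ⁅(τ : A), (γ : A) * ↑(τ ^ m) * γ⁆ * ↑(τ ^ b) =
      (Q - 1) * ((↑(τ ^ (a + 1)) : A) * γ * ↑(τ ^ (m + b)) -
        (↑(τ ^ (m + a)) : A) * γ * ↑(τ ^ (b + 1))) := by
  rw [h.lie_mul_zpow_mul, ← mul_assoc, ← (h.commute_sub_one _).eq, mul_assoc, mul_assoc]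
  simp only [mul_sub, sub_mul, ← mul_assoc, ← Units.val_mul]
  congr 3 <;> group

theorem zpow_natCast_mul_eq (h : IsHeckeB2 Q τ γ) (m : ℤ) (i : ℕ) :
    (↑(τ ^ (i : ℤ)) : A) * γ * ↑(τ ^ m) * γ =
      (γ : A) * ↑(τ ^ m) * γ * ↑(τ ^ (i : ℤ)) +
        (Q - 1) * ∑ j ∈ range i, (↑(τ ^ ((j : ℤ) + 1)) : A) * γ * ↑(τ ^ (m + i - (j + 1))) +
        (1 - Q) * ∑ j ∈ range i, (↑(τ ^ (m + j)) : A) * γ * ↑(τ ^ ((i : ℤ) - j)) := by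
  have hsum := lie_units_zpow_natCast_left τ ((γ : A) * ↑(τ ^ m) * γ) i
  simp only [h.zpow_mul_lie_mul_zpow, ← mul_sum, sum_sub_distrib] at hsum
  have hreindex₁ : ∑ j ∈ range i, (↑(τ ^ ((j : ℤ) + 1)) * γ * ↑(τ ^ (m + (i - (j + 1)))) : A) =
      ∑ j ∈ range i, (↑(τ ^ ((j : ℤ) + 1)) : A) * γ * ↑(τ ^ (m + i - (j + 1))) := by
    simp only [add_sub_assoc]
  have hreindex₂ : ∑ j ∈ range i, (↑(τ ^ (m + j)) * γ * ↑(τ ^ ((i : ℤ) - (j + 1) + 1)) : A) =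
      ∑ j ∈ range i, (↑(τ ^ (m + j)) : A) * γ * ↑(τ ^ ((i : ℤ) - j)) := by
    simp only [sub_add_eq_sub_sub, sub_add_cancel]
  rw [hreindex₁, hreindex₂, Ring.lie_def] at hsum
  rw [← sub_eq_zero, ← sub_eq_zero.mpr hsum]
  noncomm_ring

theorem zpow_neg_natCast_mul_eq (h : IsHeckeB2 Q τ γ) (m : ℤ) (i : ℕ) :
    (↑(τ ^ (-(i : ℤ))) : A) * γ * ↑(τ ^ m) * γ =
      (γ : A) * ↑(τ ^ m) * γ * ↑(τ ^ (-(i : ℤ))) +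
        (Q - 1) * ∑ j ∈ range i, (↑(τ ^ (m - (j + 1))) : A) * γ * ↑(τ ^ (-((i : ℤ) - (j + 1)))) +
        (1 - Q) * ∑ j ∈ range i, (↑(τ ^ (-((i : ℤ) - (j + 1)))) : A) * γ * ↑(τ ^ (m - (j + 1))) := by
  have hsum := lie_units_zpow_neg_natCast_left τ ((γ : A) * ↑(τ ^ m) * γ) i
  simp only [h.zpow_mul_lie_mul_zpow, ← mul_sum, sum_sub_distrib] at hsum
  have hreindex₁ : ∑ j ∈ range i, (↑(τ ^ (-((j : ℤ) + 1) + 1)) : A) * γ * ↑(τ ^ (m + -((i : ℤ) - j))) =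
      ∑ j ∈ range i, (↑(τ ^ (-((i : ℤ) - (j + 1)))) : A) * γ * ↑(τ ^ (m - (j + 1))) := by
    rw [← sum_range_reflect]
    refine sum_congr rfl fun j hj => ?_
    have hji : ((i - 1 - j : ℕ) : ℤ) = i - 1 - j := by have := mem_range.mp hj; omega
    rw [hji]
    congr 4 <;> ring
  have hreindex₂ : ∑ j ∈ range i, (↑(τ ^ (m + -((j : ℤ) + 1))) : A) * γ * ↑(τ ^ (-((i : ℤ) - j) + 1)) =
      ∑ j ∈ range i, (↑(τ ^ (m - (j + 1))) : A) * γ * ↑(τ ^ (-((i : ℤ) - (j + 1)))) := by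
    refine sum_congr rfl fun j _ => ?_
    rw [← sub_eq_add_neg, show -((i : ℤ) - j) + 1 = -((i : ℤ) - (j + 1)) by ring]
  rw [hreindex₁, hreindex₂, Ring.lie_def] at hsum
  rw [← sub_eq_zero, ← sub_eq_zero.mpr hsum]
  noncomm_ring

end IsHeckeB2

/-- Fundamental Lemma, Lemma 5.  In `H_n(q,∞)` (and likewise in
`H_n(q,d)`), for `i, k ∈ ℕ` and `ε ∈ {+1, -1}`:
(i) `t^{εi} g_1^ε t^{εk} g_1^ε = g_1^ε t^{εk} g_1^ε t^{εi}
      + (q^ε-1) ∑_{j=1}^{i} t^{εj} g_1^ε t^{ε(k+i-j)}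
      + (1-q^ε) ∑_{j=0}^{i-1} t^{ε(k+j)} g_1^ε t^{ε(i-j)}`;
(ii) `t^{-εi} g_1^ε t^{εk} g_1^ε = g_1^ε t^{εk} g_1^ε t^{-εi}
      + (q^ε-1) ∑_{j=1}^{i} t^{ε(k-j)} g_1^ε t^{-ε(i-j)}
      + (1-q^ε) ∑_{j=1}^{i} t^{-ε(i-j)} g_1^ε t^{ε(k-j)}`. -/
theorem statement_12 {A : Type*} [Ring A] (q t : Aˣ) (g : ℕ → Aˣ) (n : ℕ) (hn : 2 ≤ n)
    (hrel : HeckeRels q t g (n - 1)) (e : ℤ) (he : e = 1 ∨ e = -1) (i k : ℕ) :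
    (((t ^ (e * (i : ℤ)) : Aˣ) : A) * ((g 1 ^ e : Aˣ) : A) *
          ((t ^ (e * (k : ℤ)) : Aˣ) : A) * ((g 1 ^ e : Aˣ) : A) =
      ((g 1 ^ e : Aˣ) : A) * ((t ^ (e * (k : ℤ)) : Aˣ) : A) * ((g 1 ^ e : Aˣ) : A) *
          ((t ^ (e * (i : ℤ)) : Aˣ) : A) +
        (((q ^ e : Aˣ) : A) - 1) *
          ∑ j ∈ Finset.range i,
            ((t ^ (e * ((j : ℤ) + 1)) : Aˣ) : A) * ((g 1 ^ e : Aˣ) : A) *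
              ((t ^ (e * ((k : ℤ) + (i : ℤ) - ((j : ℤ) + 1))) : Aˣ) : A) +
        (1 - ((q ^ e : Aˣ) : A)) *
          ∑ j ∈ Finset.range i,
            ((t ^ (e * ((k : ℤ) + (j : ℤ))) : Aˣ) : A) * ((g 1 ^ e : Aˣ) : A) *
              ((t ^ (e * ((i : ℤ) - (j : ℤ))) : Aˣ) : A)) ∧
    (((t ^ (-(e * (i : ℤ))) : Aˣ) : A) * ((g 1 ^ e : Aˣ) : A) *
          ((t ^ (e * (k : ℤ)) : Aˣ) : A) * ((g 1 ^ e : Aˣ) : A) =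
      ((g 1 ^ e : Aˣ) : A) * ((t ^ (e * (k : ℤ)) : Aˣ) : A) * ((g 1 ^ e : Aˣ) : A) *
          ((t ^ (-(e * (i : ℤ))) : Aˣ) : A) +
        (((q ^ e : Aˣ) : A) - 1) *
          ∑ j ∈ Finset.range i,
            ((t ^ (e * ((k : ℤ) - ((j : ℤ) + 1))) : Aˣ) : A) * ((g 1 ^ e : Aˣ) : A) *
              ((t ^ (-(e * ((i : ℤ) - ((j : ℤ) + 1)))) : Aˣ) : A) +
        (1 - ((q ^ e : Aˣ) : A)) *
          ∑ j ∈ Finset.range i,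
            ((t ^ (-(e * ((i : ℤ) - ((j : ℤ) + 1)))) : Aˣ) : A) * ((g 1 ^ e : Aˣ) : A) *
              ((t ^ (e * ((k : ℤ) - ((j : ℤ) + 1))) : Aˣ) : A)) := by
  have hB2 : IsHeckeB2 (q ^ e) (t ^ e) (g 1 ^ e) := by
    have h := hrel.isHeckeB2 (by omega)
    rcases he with rfl | rfl
    · simpa only [zpow_one] using h
    · simpa only [zpow_neg_one] using h.inv
  simpa only [← mul_neg, zpow_mul] using
    And.intro (hB2.zpow_natCast_mul_eq k i) (hB2.zpow_neg_natCast_mul_eq k i)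

end KnotTypeB
end
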